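/- Let α_0, β_1, α_1, ..., β_k, α_k be a proposal-rejection alternating sequence in a Stable Roommates instance H with strict preferences, starting from a stable matching M_0 of H − α_0 and inducing matchings M_1, ..., M_k. Then for every i ∈ {1, ..., k}, the matching M_i is stable in the market H − α_i. -/
import Mathlib


/-- A housing market: each agent `a` has a strict partial order `pref a` on agents,
where `pref a b c` means `a` prefers the house of `c` to the house of `b` (i.e. `b ≺_a c`). -/
structure HousingMarket (N : Type) where
  pref : N → N → N → Prop
  irrefl : ∀ a b, ¬ pref a b b
  trans : ∀ a b c d, pref a b c → pref a c d → pref a b d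

variable {N : Type} [Fintype N] [DecidableEq N]

/-- `(a,b)` is an arc of the acceptability graph `G^H` (including all loops). -/
def accepts (H : HousingMarket N) (a b : N) : Prop := a = b ∨ H.pref a a b

/-- An allocation: a permutation of the agents all of whose arcs are acceptable. -/
def IsAllocation (H : HousingMarket N) (X : N → N) : Prop :=
  Function.Bijective X ∧ ∀ a, accepts H a (X a)

/-- A blocking cycle for `X`: a directed cycle of the acceptability graph (given as a
nonempty duplicate-free list, with successor `c.next`) on which every agent strictly
prefers the house of her successor to the house she gets in `X`. -/
def IsBlockingCycle (H : HousingMarket N) (X : N → N) (c : List N) : Prop :=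
  c ≠ [] ∧ c.Nodup ∧
    ∀ (a : N) (h : a ∈ c), accepts H a (c.next a h) ∧ H.pref a (X a) (c.next a h)

/-- `X` is in the core of `H`. -/
def InCore (H : HousingMarket N) (X : N → N) : Prop :=
  IsAllocation H X ∧ ∀ c : List N, ¬ IsBlockingCycle H X c

/-- A digraph (given by its arc relation `R`) has a directed cycle. -/
def HasCycle (R : N → N → Prop) : Prop :=
  ∃ c : List N, c ≠ [] ∧ c.Nodup ∧ ∀ (a : N) (h : a ∈ c), R a (c.next a h)

/-- Preferences of every agent are strict total orders on her acceptable set. -/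
def StrictPrefs (H : HousingMarket N) : Prop :=
  ∀ a b c, accepts H a b → accepts H a c → b ≠ c → H.pref a b c ∨ H.pref a c b

/-- `H'` is a `(p,q)`-improvement of `H`: only `q`'s preferences change, they agree
on `N \ {p}`, and the value of `p`'s house weakly rises for `q`. -/
def IsPQImprovement (H H' : HousingMarket N) (p q : N) : Prop :=
  (∀ a, a ≠ q → H.pref a = H'.pref a) ∧
  (∀ a b, a ≠ p → b ≠ p → (H.pref q a b ↔ H'.pref q a b)) ∧
  (∀ a, H.pref q a p → H'.pref q a p)

/-- `H'` is a `p`-improvement of `H`: a finite composition of `(p,q)`-improvements. -/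
def IsPImprovement (H H' : HousingMarket N) (p : N) : Prop :=
  Relation.ReflTransGen (fun K K' => ∃ q, IsPQImprovement K K' p q) H H'

/-- Mutual acceptability for Stable Roommates: `a ≺_a b` iff `b ≺_b a`. -/
def Mutual (H : HousingMarket N) : Prop := ∀ a b, H.pref a a b ↔ H.pref b b a

/-- A matching: an involution on agents, matched pairs being mutually acceptable
(`M a = a` means `a` is unmatched). -/
def IsMatching (H : HousingMarket N) (M : N → N) : Prop :=
  (∀ a, M (M a) = a) ∧ ∀ a, M a ≠ a → H.pref a a (M a)

/-- `{a,b}` is a blocking pair for `M`: each of them is unmatched or prefers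
the other to her partner (using the convention `M a = a` for unmatched agents). -/
def BlockingPair (H : HousingMarket N) (M : N → N) (a b : N) : Prop :=
  a ≠ b ∧ H.pref a (M a) b ∧ H.pref b (M b) a

/-- A stable matching. -/
def IsStableMatching (H : HousingMarket N) (M : N → N) : Prop :=
  IsMatching H M ∧ ∀ a b, ¬ BlockingPair H M a b

/-- One proposal-rejection step preserves the invariant. -/
lemma step_lemma (H : HousingMarket N) (hmut : Mutual H)
    (M M' : N → N) (a0 b a1 : N)
    (hm : IsMatching H M) (hu : M a0 = a0)
    (hs : ∀ x y, x ≠ a0 → y ≠ a0 → ¬ BlockingPair H M x y)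
    (h1 : H.pref b (M b) a0)
    (h2 : ∀ x, H.pref x (M x) a0 → x ≠ b → H.pref a0 x b)
    (h3 : M b ≠ b) (h4 : a1 = M b)
    (h5 : ∀ x, M' x = if x = a1 then a1 else if x = b then a0
          else if x = a0 then b else M x) :
    IsMatching H M' ∧ M' a1 = a1 ∧
      ∀ x y, x ≠ a1 → y ≠ a1 → ¬ BlockingPair H M' x y := by
  obtain ⟨hinv, hacc⟩ := hm
  have hba0 : b ≠ a0 := fun h => h3 (by rw [h, hu])
  have ha1a0 : a1 ≠ a0 := by
    intro h
    apply hba0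
    have hMb : M b = a0 := by rw [← h4, h]
    have := congrArg M hMb
    rwa [hinv, hu] at this
  have ha1b : a1 ≠ b := by rw [h4]; exact h3
  have va1 : M' a1 = a1 := by rw [h5, if_pos rfl]
  have vb : M' b = a0 := by rw [h5, if_neg (Ne.symm ha1b), if_pos rfl]
  have va0 : M' a0 = b := by
    rw [h5, if_neg (Ne.symm ha1a0), if_neg (Ne.symm hba0), if_pos rfl]
  have vother : ∀ x, x ≠ a1 → x ≠ b → x ≠ a0 → M' x = M x := by
    intro x hx1 hxb hx0
    rw [h5, if_neg hx1, if_neg hxb, if_neg hx0]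
  have hMne : ∀ x, x ≠ a1 → x ≠ b → x ≠ a0 →
      M x ≠ a1 ∧ M x ≠ b ∧ M x ≠ a0 := by
    intro x hx1 hxb hx0
    refine ⟨?_, ?_, ?_⟩
    · intro h
      apply hxb
      have h' : M (M x) = M (M b) := by rw [h, h4]
      rwa [hinv, hinv] at h'
    · intro h
      apply hx1
      rw [h4, ← h, hinv]
    · intro h
      apply hx0
      have := congrArg M h
      rwa [hinv, hu] at this
  have haccb1 : H.pref b b (M b) := hacc b h3
  have haccba0 : H.pref b b a0 := H.trans b b (M b) a0 haccb1 h1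
  have hacca0b : H.pref a0 a0 b := (hmut b a0).mp haccba0
  refine ⟨⟨?_, ?_⟩, va1, ?_⟩
  · -- involution
    intro x
    by_cases hx1 : x = a1
    · subst hx1; rw [va1, va1]
    · by_cases hxb : x = b
      · subst hxb; rw [vb, va0]
      · by_cases hx0 : x = a0
        · subst hx0; rw [va0, vb]
        · obtain ⟨n1, n2, n3⟩ := hMne x hx1 hxb hx0
          rw [vother x hx1 hxb hx0, vother _ n1 n2 n3, hinv]
  · -- acceptability
    intro x hx
    by_cases hx1 : x = a1
    · subst hx1; rw [va1] at hx; exact absurd rfl hx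
    · by_cases hxb : x = b
      · subst hxb; rw [vb]; exact haccba0
      · by_cases hx0 : x = a0
        · subst hx0; rw [va0]; exact hacca0b
        · rw [vother x hx1 hxb hx0] at hx ⊢; exact hacc x hx
  · -- stability
    intro x y hx1 hy1 hbp
    obtain ⟨hxy, hxp, hyp⟩ := hbp
    have case_a0 : ∀ z, z ≠ a1 → z ≠ a0 →
        H.pref a0 b z → H.pref z (M' z) a0 → False := by
      intro z hz1 hz0 hp hq
      by_cases hzb : z = b
      · rw [hzb] at hp; exact H.irrefl a0 b hp
      · rw [vother z hz1 hzb hz0] at hq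
        exact H.irrefl a0 b (H.trans a0 b z b hp (h2 z hq hzb))
    have case_b : ∀ z, z ≠ a1 → z ≠ a0 → z ≠ b →
        H.pref b a0 z → H.pref z (M' z) b → False := by
      intro z hz1 hz0 hzb hp hq
      rw [vother z hz1 hzb hz0] at hq
      exact hs b z hba0 hz0 ⟨Ne.symm hzb, H.trans b (M b) a0 z h1 hp, hq⟩
    by_cases hx0 : x = a0
    · subst hx0; rw [va0] at hxp
      exact case_a0 y hy1 (Ne.symm hxy) hxp hyp
    · by_cases hy0 : y = a0
      · subst hy0; rw [va0] at hyp
        exact case_a0 x hx1 hx0 hyp hxp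
      · by_cases hxb : x = b
        · subst hxb; rw [vb] at hxp
          exact case_b y hy1 hy0 (Ne.symm hxy) hxp hyp
        · by_cases hyb : y = b
          · subst hyb; rw [vb] at hyp
            exact case_b x hx1 hx0 hxb hyp hxp
          · rw [vother x hx1 hxb hx0] at hxp
            rw [vother y hy1 hyb hy0] at hyp
            exact hs x y hx0 hy0 ⟨hxy, hxp, hyp⟩

/-- along a proposal-rejection alternating sequence starting from a
stable matching `M 0` of `H − α 0`, each induced matching `M i` is a stable matching
of `H − α i`. -/
theorem stmt13 (H : HousingMarket N)
    (hmut : Mutual H) (hstrict : StrictPrefs H)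
    (k : ℕ) (α β : ℕ → N) (M : ℕ → N → N)
    (h0m : IsMatching H (M 0)) (h0u : M 0 (α 0) = α 0)
    (h0s : ∀ a b, a ≠ α 0 → b ≠ α 0 → ¬ BlockingPair H (M 0) a b)
    (hstep : ∀ i, 1 ≤ i → i ≤ k →
      -- (i) `β i` is willing to accept `α (i-1)` ...
      H.pref (β i) (M (i-1) (β i)) (α (i-1)) ∧
      -- ... and is the agent most preferred by `α (i-1)` among the willing agents;
      (∀ b, H.pref b (M (i-1) b) (α (i-1)) → b ≠ β i → H.pref (α (i-1)) b (β i)) ∧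
      -- (ii) `β i` is matched in `M (i-1)` and `α i` is its partner;
      M (i-1) (β i) ≠ β i ∧ α i = M (i-1) (β i) ∧
      -- (iii) `M i` is obtained from `M (i-1)` by matching `α (i-1)` with `β i`,
      -- leaving `α i` unmatched.
      (∀ b, M i b = if b = α i then α i else if b = β i then α (i-1)
            else if b = α (i-1) then β i else M (i-1) b)) :
    ∀ i, 1 ≤ i → i ≤ k →
      IsMatching H (M i) ∧ M i (α i) = α i ∧
      ∀ a b, a ≠ α i → b ≠ α i → ¬ BlockingPair H (M i) a b := by
  have main : ∀ i, i ≤ k → IsMatching H (M i) ∧ M i (α i) = α i ∧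
      ∀ a b, a ≠ α i → b ≠ α i → ¬ BlockingPair H (M i) a b := by
    intro i
    induction i with
    | zero => intro _; exact ⟨h0m, h0u, h0s⟩
    | succ n ih =>
      intro hle
      have hn := ih (Nat.le_of_succ_le hle)
      obtain ⟨hA, hB, hC, hD, hE⟩ := hstep (n + 1) (Nat.le_add_left 1 n) hle
      have hred : n + 1 - 1 = n := rfl
      rw [hred] at hA hB hC hD
      exact step_lemma H hmut (M n) (M (n + 1)) (α n) (β (n + 1)) (α (n + 1))
        hn.1 hn.2.1 hn.2.2 hA hB hC hD hE
  intro i _ h2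
  exact main i h2
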